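/- arXiv:2309.01107 — 2 statements merged into one kernel-verified Lean document; each statement's English description precedes it below -/
import Mathlib

section
/- Let 𝓡 be a nonempty compact subset of S → A → ℝ and let C(𝓡) = {R : S → A → ℝ | ∀ s, ∃ R' ∈ 𝓡, R s = R' s} be the smallest s-rectangular set containing 𝓡. Then for every policy π, every v : S → ℝ, and every state s, the robust Bellman evaluation operator applied to the non-rectangular set 𝓡 agrees with the one applied to C(𝓡): ⨅_{R ∈ 𝓡} (∑_a π s a * R(s,a) + γ * ∑_{s'} P^π(s,s') * v(s')) = ⨅_{R ∈ C(𝓡)} (∑_a π s a * R(s,a) + γ * ∑_{s'} P^π(s,s') * v(s')). -/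
open Finset

/-- `P^π(s,s') = ∑ a, π s a * P s a s'`. -/
noncomputable def Pmat {S A : Type*} [Fintype A] (P : S → A → S → ℝ) (π : S → A → ℝ) :
    Matrix S S ℝ := fun s s' => ∑ a, π s a * P s a s'

/-- `C(𝓡)`, the s-rectangular hull of `𝓡`. -/
def CRect {S A : Type*} (𝓡 : Set (S → A → ℝ)) : Set (S → A → ℝ) :=
  {R : S → A → ℝ | ∀ s, ∃ R' ∈ 𝓡, R s = R' s}

theorem stmt_8 {S A : Type*} [Fintype S] [Fintype A] [Nonempty S] [Nonempty A]
    (γ : ℝ) (hγ0 : 0 ≤ γ) (hγ1 : γ < 1)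
    (P : S → A → S → ℝ) (hP : ∀ s a s', 0 ≤ P s a s')
    (hPsum : ∀ s a, ∑ s', P s a s' = 1)
    (π : S → A → ℝ) (hπ : ∀ s a, 0 ≤ π s a) (hπsum : ∀ s, ∑ a, π s a = 1)
    (𝓡 : Set (S → A → ℝ)) (h𝓡ne : 𝓡.Nonempty) (h𝓡comp : IsCompact 𝓡)
    (v : S → ℝ) (s : S) :
    (⨅ R : 𝓡, (∑ a, π s a * (R : S → A → ℝ) s a + γ * ∑ s', Pmat P π s s' * v s')) =
    (⨅ R : CRect 𝓡, (∑ a, π s a * (R : S → A → ℝ) s a + γ * ∑ s', Pmat P π s s' * v s')) := by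
  rw [iInf, iInf]
  congr 1
  ext x
  constructor
  · rintro ⟨⟨R, hR⟩, rfl⟩
    exact ⟨⟨R, fun _ => ⟨R, hR, rfl⟩⟩, rfl⟩
  · rintro ⟨⟨R, hR⟩, rfl⟩
    obtain ⟨R', hR', hEq⟩ := hR s
    exact ⟨⟨R', hR'⟩, by simp [hEq]⟩
end

section
/- Let 𝓡 be a nonempty compact subset of S → A → ℝ and let C(𝓡) = {R : S → A → ℝ | ∀ s, ∃ R' ∈ 𝓡, R s = R' s}. Let Π denote the set of policies. Then for every v : S → ℝ and every state s, the robust Bellman optimal operator applied to 𝓡 agrees with the one applied to C(𝓡): ⨆_{π ∈ Π} ⨅_{R ∈ 𝓡} (∑_a π s a * R(s,a) + γ * ∑_{s'} P^π(s,s') * v(s')) = ⨆_{π ∈ Π} ⨅_{R ∈ C(𝓡)} (∑_a π s a * R(s,a) + γ * ∑_{s'} P^π(s,s') * v(s')). -/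
open Finset

/-- the set of stationary policies. -/
def Policies (S A : Type*) [Fintype A] : Set (S → A → ℝ) :=
  {π : S → A → ℝ | (∀ s a, 0 ≤ π s a) ∧ ∀ s, ∑ a, π s a = 1}

theorem stmt_9 {S A : Type*} [Fintype S] [Fintype A] [Nonempty S] [Nonempty A]
    (γ : ℝ) (hγ0 : 0 ≤ γ) (hγ1 : γ < 1)
    (P : S → A → S → ℝ) (hP : ∀ s a s', 0 ≤ P s a s')
    (hPsum : ∀ s a, ∑ s', P s a s' = 1)
    (𝓡 : Set (S → A → ℝ)) (h𝓡ne : 𝓡.Nonempty) (h𝓡comp : IsCompact 𝓡)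
    (v : S → ℝ) (s : S) :
    (⨆ π : Policies S A, ⨅ R : 𝓡,
      (∑ a, (π : S → A → ℝ) s a * (R : S → A → ℝ) s a +
        γ * ∑ s', Pmat P (π : S → A → ℝ) s s' * v s')) =
    (⨆ π : Policies S A, ⨅ R : CRect 𝓡,
      (∑ a, (π : S → A → ℝ) s a * (R : S → A → ℝ) s a +
        γ * ∑ s', Pmat P (π : S → A → ℝ) s s' * v s')) := by
  have key : ∀ π : S → A → ℝ,
      (⨅ R : 𝓡, (∑ a, π s a * (R : S → A → ℝ) s a +
        γ * ∑ s', Pmat P π s s' * v s')) =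
      (⨅ R : CRect 𝓡, (∑ a, π s a * (R : S → A → ℝ) s a +
        γ * ∑ s', Pmat P π s s' * v s')) := by
    intro π
    rw [iInf, iInf]
    congr 1
    ext x
    constructor
    · rintro ⟨⟨R, hR⟩, rfl⟩
      exact ⟨⟨R, fun _ => ⟨R, hR, rfl⟩⟩, rfl⟩
    · rintro ⟨⟨R, hR⟩, rfl⟩
      obtain ⟨R', hR', hRs⟩ := hR s
      exact ⟨⟨R', hR'⟩, by simp [hRs]⟩
  exact iSup_congr fun π => key π
end
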